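/- Let Φ = ⋀_{i=1}^n (l₁^i ∨ l₂^i ∨ l₃^i) be a 3-CNF formula over variables x₁,…,xₘ, and let 𝒫 and 𝒩 be the sets of infinite words produced by the reduction. Then Φ is satisfiable if and only if there exists an LTL formula φ with Sz(φ) ≤ 2m − 1 that separates 𝒫 and 𝒩. -/

import Mathlib

namespace Temporal

/-- LTL formulas over a set of atomic propositions `P`. -/
inductive LTL (P : Type) : Type where
  | atom : P → LTL P
  | lnot : LTL P → LTL P
  | land : LTL P → LTL P → LTL P
  | lor : LTL P → LTL P → LTL P
  | limp : LTL P → LTL P → LTL P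
  | liff : LTL P → LTL P → LTL P
  | next : LTL P → LTL P
  | fut : LTL P → LTL P
  | glob : LTL P → LTL P
  | untl : LTL P → LTL P → LTL P
  | rel : LTL P → LTL P → LTL P
  | wuntl : LTL P → LTL P → LTL P
  | mrel : LTL P → LTL P → LTL P

variable {P : Type}

/-- Suffix `w[i:]` of an infinite word. -/
def shift (w : ℕ → Set P) (i : ℕ) : ℕ → Set P := fun n => w (n + i)

/-- The constant infinite word `α^ω`. -/
def constW (α : Set P) : ℕ → Set P := fun _ => α

/-- LTL semantics on infinite words. -/
def LTL.Sat : LTL P → (ℕ → Set P) → Prop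
  | .atom p, w => p ∈ w 0
  | .lnot φ, w => ¬ φ.Sat w
  | .land φ ψ, w => φ.Sat w ∧ ψ.Sat w
  | .lor φ ψ, w => φ.Sat w ∨ ψ.Sat w
  | .limp φ ψ, w => ¬ φ.Sat w ∨ ψ.Sat w
  | .liff φ ψ, w => (φ.Sat w ∧ ψ.Sat w) ∨ (¬ φ.Sat w ∧ ¬ ψ.Sat w)
  | .next φ, w => φ.Sat (shift w 1)
  | .fut φ, w => ∃ i, φ.Sat (shift w i)
  | .glob φ, w => ∀ i, φ.Sat (shift w i)
  | .untl φ ψ, w => ∃ i, ψ.Sat (shift w i) ∧ ∀ j < i, φ.Sat (shift w j)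
  | .rel φ ψ, w => ¬ ∃ i, ¬ ψ.Sat (shift w i) ∧ ∀ j < i, ¬ φ.Sat (shift w j)
  | .wuntl φ ψ, w =>
      (∃ i, ψ.Sat (shift w i) ∧ ∀ j < i, φ.Sat (shift w j)) ∨ ∀ i, φ.Sat (shift w i)
  | .mrel φ ψ, w =>
      (¬ ∃ i, ¬ ψ.Sat (shift w i) ∧ ∀ j < i, ¬ φ.Sat (shift w j)) ∧ ∃ i, φ.Sat (shift w i)

/-- The set of subformulas of an LTL formula. -/
def LTL.SubF : LTL P → Set (LTL P)
  | .atom p => {.atom p}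
  | .lnot φ => insert (.lnot φ) φ.SubF
  | .land φ ψ => insert (.land φ ψ) (φ.SubF ∪ ψ.SubF)
  | .lor φ ψ => insert (.lor φ ψ) (φ.SubF ∪ ψ.SubF)
  | .limp φ ψ => insert (.limp φ ψ) (φ.SubF ∪ ψ.SubF)
  | .liff φ ψ => insert (.liff φ ψ) (φ.SubF ∪ ψ.SubF)
  | .next φ => insert (.next φ) φ.SubF
  | .fut φ => insert (.fut φ) φ.SubF
  | .glob φ => insert (.glob φ) φ.SubF
  | .untl φ ψ => insert (.untl φ ψ) (φ.SubF ∪ ψ.SubF)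
  | .rel φ ψ => insert (.rel φ ψ) (φ.SubF ∪ ψ.SubF)
  | .wuntl φ ψ => insert (.wuntl φ ψ) (φ.SubF ∪ ψ.SubF)
  | .mrel φ ψ => insert (.mrel φ ψ) (φ.SubF ∪ ψ.SubF)

/-- The size of an LTL formula: its number of (distinct) subformulas. -/
noncomputable def LTL.Sz (φ : LTL P) : ℕ := φ.SubF.ncard

/-- The set of atomic propositions occurring in a formula. -/
def LTL.props (φ : LTL P) : Set P := {p : P | LTL.atom p ∈ φ.SubF}

/-- A formula is temporal-free if no temporal operator occurs in it. -/
inductive LTL.TemporalFree : LTL P → Prop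
  | atom (p : P) : TemporalFree (.atom p)
  | lnot {φ : LTL P} : TemporalFree φ → TemporalFree (.lnot φ)
  | land {φ ψ : LTL P} : TemporalFree φ → TemporalFree ψ → TemporalFree (.land φ ψ)
  | lor {φ ψ : LTL P} : TemporalFree φ → TemporalFree ψ → TemporalFree (.lor φ ψ)
  | limp {φ ψ : LTL P} : TemporalFree φ → TemporalFree ψ → TemporalFree (.limp φ ψ)
  | liff {φ ψ : LTL P} : TemporalFree φ → TemporalFree ψ → TemporalFree (.liff φ ψ)

/-- Concise formulas: atoms, and binary combinations of concise formulas over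
disjoint sets of propositions. -/
inductive LTL.Concise : LTL P → Prop
  | atom (p : P) : Concise (.atom p)
  | land {φ ψ : LTL P} : Concise φ → Concise ψ → φ.props ∩ ψ.props = ∅ → Concise (.land φ ψ)
  | lor {φ ψ : LTL P} : Concise φ → Concise ψ → φ.props ∩ ψ.props = ∅ → Concise (.lor φ ψ)
  | limp {φ ψ : LTL P} : Concise φ → Concise ψ → φ.props ∩ ψ.props = ∅ → Concise (.limp φ ψ)
  | liff {φ ψ : LTL P} : Concise φ → Concise ψ → φ.props ∩ ψ.props = ∅ → Concise (.liff φ ψ)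
  | untl {φ ψ : LTL P} : Concise φ → Concise ψ → φ.props ∩ ψ.props = ∅ → Concise (.untl φ ψ)
  | rel {φ ψ : LTL P} : Concise φ → Concise ψ → φ.props ∩ ψ.props = ∅ → Concise (.rel φ ψ)
  | wuntl {φ ψ : LTL P} : Concise φ → Concise ψ → φ.props ∩ ψ.props = ∅ → Concise (.wuntl φ ψ)
  | mrel {φ ψ : LTL P} : Concise φ → Concise ψ → φ.props ∩ ψ.props = ∅ → Concise (.mrel φ ψ)

/-- Formulas in which the only binary operator occurring is `∨`. -/
inductive LTL.OnlyOrBin : LTL P → Prop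
  | atom (p : P) : OnlyOrBin (.atom p)
  | lnot {φ : LTL P} : OnlyOrBin φ → OnlyOrBin (.lnot φ)
  | lor {φ ψ : LTL P} : OnlyOrBin φ → OnlyOrBin ψ → OnlyOrBin (.lor φ ψ)
  | next {φ : LTL P} : OnlyOrBin φ → OnlyOrBin (.next φ)
  | fut {φ : LTL P} : OnlyOrBin φ → OnlyOrBin (.fut φ)
  | glob {φ : LTL P} : OnlyOrBin φ → OnlyOrBin (.glob φ)

/-- Formulas that are disjunctions of atomic propositions, built using only `∨`. -/
inductive LTL.OrOfAtoms : LTL P → Prop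
  | atom (p : P) : OrOfAtoms (.atom p)
  | lor {φ ψ : LTL P} : OrOfAtoms φ → OrOfAtoms ψ → OrOfAtoms (.lor φ ψ)

/- ### The 3-SAT reduction.
Variables `x_k` are indexed by `k < m`; the atomic proposition `(k, true)`
represents `x_k` and `(k, false)` represents `x̄_k`. -/

/-- A literal: a variable index together with its polarity. -/
abbrev Lit := ℕ × Bool

/-- A 3-clause. -/
abbrev Clause3 := Lit × Lit × Lit

/-- A literal holds under a valuation. -/
def litSat (v : ℕ → Bool) (l : Lit) : Prop := v l.1 = l.2

/-- A clause holds under a valuation. -/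
def clauseSat (v : ℕ → Bool) (c : Clause3) : Prop :=
  litSat v c.1 ∨ litSat v c.2.1 ∨ litSat v c.2.2

/-- A valuation satisfies a 3-CNF formula (a list of clauses). -/
def cnfSat (v : ℕ → Bool) (Φ : List Clause3) : Prop := ∀ c ∈ Φ, clauseSat v c

/-- All variables of the 3-CNF formula are among `x_0, …, x_{m-1}`. -/
def cnfVars (m : ℕ) (Φ : List Clause3) : Prop :=
  ∀ c ∈ Φ, c.1.1 < m ∧ c.2.1.1 < m ∧ c.2.2.1 < m

/-- The letter `C_i = {l̃₁, l̃₂, l̃₃}` associated with a clause. -/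
def clauseSet (c : Clause3) : Set Lit := {c.1, c.2.1, c.2.2}

/-- The pair `X_k = {x_k, x̄_k}` of propositions associated with variable `x_k`. -/
def rho (k : ℕ) : Set Lit := {(k, true), (k, false)}

/-- The set `𝒫` of positive words of the reduction. -/
def Pos (m : ℕ) (Φ : List Clause3) : Set (ℕ → Set Lit) :=
  {w | (∃ c ∈ Φ, w = constW (clauseSet c)) ∨ ∃ k < m, w = constW (rho k)}

/-- The negative word `η = ∅^ω`. -/
def negWord : ℕ → Set Lit := constW ∅

/-- `φ` separates `𝒫` and `𝒩 = {η}`. -/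
def Separates (m : ℕ) (Φ : List Clause3) (φ : LTL Lit) : Prop :=
  (∀ w ∈ Pos m Φ, φ.Sat w) ∧ ¬ φ.Sat negWord

/-- All propositions of `φ` are among `{x_k, x̄_k : k < m}`. -/
def propsInRange (m : ℕ) (φ : LTL Lit) : Prop := ∀ p ∈ φ.props, p.1 < m

/-- The disjunction `x_0^v ∨ x_1^v ∨ ⋯ ∨ x_{m-1}^v` (for `m ≥ 1`),
where `x_k^v` is the atom `(k, v k)`. -/
def vDisj (v : ℕ → Bool) : ℕ → LTL Lit
  | 0 => .atom (0, v 0)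
  | 1 => .atom (0, v 0)
  | (k + 2) => .lor (vDisj v (k + 1)) (.atom (k + 1, v (k + 1)))

/-- A formula is disjunctive on a set `I` of variable indices. -/
def DisjunctiveOn (I : Set ℕ) (φ : LTL Lit) : Prop :=
  φ.TemporalFree ∧ φ.Concise ∧ φ.OnlyOrBin ∧
    φ.props.ncard = I.ncard ∧ ∀ k ∈ I, (φ.props ∩ rho k).ncard = 1

/-- A formula is `I`-concise for a set `I` of variable indices. -/
def IConciseOn (I : Set ℕ) (φ : LTL Lit) : Prop :=
  φ.Concise ∧ φ.props.ncard = I.ncard ∧ ∀ k ∈ I, (φ.props ∩ rho k).ncard = 1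

/- ### CTL -/

/-- CTL (state) formulas over `P`; a quantified temporal subformula, e.g. `E(φ U ψ)`,
is a single constructor (`Bool` is the path quantifier: `true` = E, `false` = A). -/
inductive CTL (P : Type) : Type where
  | atom : P → CTL P
  | lnot : CTL P → CTL P
  | land : CTL P → CTL P → CTL P
  | lor : CTL P → CTL P → CTL P
  | limp : CTL P → CTL P → CTL P
  | liff : CTL P → CTL P → CTL P
  | qnext : Bool → CTL P → CTL P
  | qfut : Bool → CTL P → CTL P
  | qglob : Bool → CTL P → CTL P
  | quntl : Bool → CTL P → CTL P → CTL P
  | qrel : Bool → CTL P → CTL P → CTL P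
  | qwuntl : Bool → CTL P → CTL P → CTL P
  | qmrel : Bool → CTL P → CTL P → CTL P

/-- A Kripke structure over `P`. -/
structure Kripke (P : Type) where
  S : Type
  I : Set S
  R : S → S → Prop
  total : ∀ s : S, ∃ t : S, R s t
  L : S → Set P

/-- An infinite path of a Kripke structure. -/
def Kripke.IsPath (M : Kripke P) (π : ℕ → M.S) : Prop := ∀ i, M.R (π i) (π (i + 1))

/-- Path quantification: `q = true` is `E` (some path from `s`), `q = false` is `A`. -/
def Kripke.Q (M : Kripke P) (q : Bool) (s : M.S) (pred : (ℕ → M.S) → Prop) : Prop :=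
  if q then ∃ π : ℕ → M.S, M.IsPath π ∧ π 0 = s ∧ pred π
  else ∀ π : ℕ → M.S, M.IsPath π → π 0 = s → pred π

/-- CTL semantics at a state of a Kripke structure. -/
def CTL.Sat (M : Kripke P) : CTL P → M.S → Prop
  | .atom p, s => p ∈ M.L s
  | .lnot φ, s => ¬ φ.Sat M s
  | .land φ ψ, s => φ.Sat M s ∧ ψ.Sat M s
  | .lor φ ψ, s => φ.Sat M s ∨ ψ.Sat M s
  | .limp φ ψ, s => ¬ φ.Sat M s ∨ ψ.Sat M s
  | .liff φ ψ, s => (φ.Sat M s ∧ ψ.Sat M s) ∨ (¬ φ.Sat M s ∧ ¬ ψ.Sat M s)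
  | .qnext q φ, s => M.Q q s fun π => φ.Sat M (π 1)
  | .qfut q φ, s => M.Q q s fun π => ∃ i, φ.Sat M (π i)
  | .qglob q φ, s => M.Q q s fun π => ∀ i, φ.Sat M (π i)
  | .quntl q φ ψ, s => M.Q q s fun π => ∃ i, ψ.Sat M (π i) ∧ ∀ j < i, φ.Sat M (π j)
  | .qrel q φ ψ, s => M.Q q s fun π => ¬ ∃ i, ¬ ψ.Sat M (π i) ∧ ∀ j < i, ¬ φ.Sat M (π j)
  | .qwuntl q φ ψ, s => M.Q q s fun π =>
      (∃ i, ψ.Sat M (π i) ∧ ∀ j < i, φ.Sat M (π j)) ∨ ∀ i, φ.Sat M (π i)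
  | .qmrel q φ ψ, s => M.Q q s fun π =>
      (¬ ∃ i, ¬ ψ.Sat M (π i) ∧ ∀ j < i, ¬ φ.Sat M (π j)) ∧ ∃ i, φ.Sat M (π i)

/-- `M ⊨ φ`: the formula holds at every initial state. -/
def Kripke.Models (M : Kripke P) (φ : CTL P) : Prop := ∀ s ∈ M.I, φ.Sat M s

/-- The set of subformulas of a CTL formula (a quantified temporal subformula counts
as a single subformula together with the subformulas of its arguments). -/
def CTL.SubF : CTL P → Set (CTL P)
  | .atom p => {.atom p}
  | .lnot φ => insert (.lnot φ) φ.SubF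
  | .land φ ψ => insert (.land φ ψ) (φ.SubF ∪ ψ.SubF)
  | .lor φ ψ => insert (.lor φ ψ) (φ.SubF ∪ ψ.SubF)
  | .limp φ ψ => insert (.limp φ ψ) (φ.SubF ∪ ψ.SubF)
  | .liff φ ψ => insert (.liff φ ψ) (φ.SubF ∪ ψ.SubF)
  | .qnext q φ => insert (.qnext q φ) φ.SubF
  | .qfut q φ => insert (.qfut q φ) φ.SubF
  | .qglob q φ => insert (.qglob q φ) φ.SubF
  | .quntl q φ ψ => insert (.quntl q φ ψ) (φ.SubF ∪ ψ.SubF)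
  | .qrel q φ ψ => insert (.qrel q φ ψ) (φ.SubF ∪ ψ.SubF)
  | .qwuntl q φ ψ => insert (.qwuntl q φ ψ) (φ.SubF ∪ ψ.SubF)
  | .qmrel q φ ψ => insert (.qmrel q φ ψ) (φ.SubF ∪ ψ.SubF)

/-- The size of a CTL formula: its number of (distinct) subformulas. -/
noncomputable def CTL.Sz (φ : CTL P) : ℕ := φ.SubF.ncard

/-- `f_{CTL→LTL}`: erase all path quantifiers. -/
def CTL.toLTL : CTL P → LTL P
  | .atom p => .atom p
  | .lnot φ => .lnot φ.toLTL
  | .land φ ψ => .land φ.toLTL ψ.toLTL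
  | .lor φ ψ => .lor φ.toLTL ψ.toLTL
  | .limp φ ψ => .limp φ.toLTL ψ.toLTL
  | .liff φ ψ => .liff φ.toLTL ψ.toLTL
  | .qnext _ φ => .next φ.toLTL
  | .qfut _ φ => .fut φ.toLTL
  | .qglob _ φ => .glob φ.toLTL
  | .quntl _ φ ψ => .untl φ.toLTL ψ.toLTL
  | .qrel _ φ ψ => .rel φ.toLTL ψ.toLTL
  | .qwuntl _ φ ψ => .wuntl φ.toLTL ψ.toLTL
  | .qmrel _ φ ψ => .mrel φ.toLTL ψ.toLTL

/-- `f_{LTL→CTL}`: insert the quantifier `E` before every temporal operator. -/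
def LTL.toCTL : LTL P → CTL P
  | .atom p => .atom p
  | .lnot φ => .lnot φ.toCTL
  | .land φ ψ => .land φ.toCTL ψ.toCTL
  | .lor φ ψ => .lor φ.toCTL ψ.toCTL
  | .limp φ ψ => .limp φ.toCTL ψ.toCTL
  | .liff φ ψ => .liff φ.toCTL ψ.toCTL
  | .next φ => .qnext true φ.toCTL
  | .fut φ => .qfut true φ.toCTL
  | .glob φ => .qglob true φ.toCTL
  | .untl φ ψ => .quntl true φ.toCTL ψ.toCTL
  | .rel φ ψ => .qrel true φ.toCTL ψ.toCTL
  | .wuntl φ ψ => .qwuntl true φ.toCTL ψ.toCTL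
  | .mrel φ ψ => .qmrel true φ.toCTL ψ.toCTL

/-- The one-state Kripke structure `M_{α^ω}`. -/
def singleKripke (α : Set P) : Kripke P where
  S := Unit
  I := Set.univ
  R := fun _ _ => True
  total := fun s => ⟨s, trivial⟩
  L := fun _ => α

set_option linter.dupNamespace false

def LTL.ht : LTL P → ℕ
  | .atom _ => 0
  | .lnot φ => φ.ht + 1
  | .land φ ψ => φ.ht + ψ.ht + 1
  | .lor φ ψ => φ.ht + ψ.ht + 1
  | .limp φ ψ => φ.ht + ψ.ht + 1
  | .liff φ ψ => φ.ht + ψ.ht + 1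
  | .next φ => φ.ht + 1
  | .fut φ => φ.ht + 1
  | .glob φ => φ.ht + 1
  | .untl φ ψ => φ.ht + ψ.ht + 1
  | .rel φ ψ => φ.ht + ψ.ht + 1
  | .wuntl φ ψ => φ.ht + ψ.ht + 1
  | .mrel φ ψ => φ.ht + ψ.ht + 1

lemma LTL.mem_subF_self (φ : LTL P) : φ ∈ φ.SubF := by
  cases φ <;> simp [LTL.SubF]

lemma LTL.subF_finite (φ : LTL P) : φ.SubF.Finite := by
  induction φ <;> simp only [LTL.SubF] <;>
    first
      | exact Set.finite_singleton _
      | exact Set.Finite.insert _ ‹_›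
      | exact Set.Finite.insert _ (Set.Finite.union ‹_› ‹_›)

lemma LTL.ht_le (φ : LTL P) : ∀ χ ∈ φ.SubF, χ.ht ≤ φ.ht := by
  induction φ <;> intro χ h <;>
    simp only [LTL.SubF, Set.mem_insert_iff, Set.mem_union,
      Set.mem_singleton_iff] at h <;>
    first
      | (subst h; exact le_refl _)
      | (rcases h with rfl | h | h
         · exact le_refl _
         · rename_i ih₁ ih₂
           exact le_trans (ih₁ χ h) (by simp only [LTL.ht]; omega)
         · rename_i ih₁ ih₂
           exact le_trans (ih₂ χ h) (by simp only [LTL.ht]; omega))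
      | (rcases h with rfl | h
         · exact le_refl _
         · rename_i ih
           exact le_trans (ih χ h) (by simp only [LTL.ht]; omega))

lemma LTL.not_mem_of_ht_lt {χ φ : LTL P} (h : φ.ht < χ.ht) : χ ∉ φ.SubF :=
  fun hm => absurd (LTL.ht_le φ χ hm) (by omega)

lemma LTL.subF_closed (φ : LTL P) : ∀ χ ∈ φ.SubF, χ.SubF ⊆ φ.SubF := by
  induction φ <;> intro χ h <;>
    simp only [LTL.SubF, Set.mem_insert_iff, Set.mem_union,
      Set.mem_singleton_iff] at h <;>
    first
      | (subst h; exact subset_refl _)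
      | (rcases h with rfl | h | h
         · exact subset_refl _
         · rename_i ih₁ ih₂
           exact (ih₁ χ h).trans (by simp only [LTL.SubF]; exact fun x hx => Set.mem_insert_iff.mpr (Or.inr (Set.mem_union_left _ hx)))
         · rename_i ih₁ ih₂
           exact (ih₂ χ h).trans (by simp only [LTL.SubF]; exact fun x hx => Set.mem_insert_iff.mpr (Or.inr (Set.mem_union_right _ hx))))
      | (rcases h with rfl | h
         · exact subset_refl _
         · rename_i ih
           exact (ih χ h).trans (by simp only [LTL.SubF]; exact Set.subset_insert _ _))

/-- The atoms occurring in a set of formulas. -/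
def Atm (S : Set (LTL P)) : Set P := {p | LTL.atom p ∈ S}

/-- The non-atomic formulas of a set of formulas. -/
def NA (S : Set (LTL P)) : Set (LTL P) := {ψ ∈ S | ∀ p, ψ ≠ LTL.atom p}

lemma props_eq_Atm (φ : LTL P) : φ.props = Atm φ.SubF := rfl

lemma Atm_mono {S T : Set (LTL P)} (h : S ⊆ T) : Atm S ⊆ Atm T :=
  fun _ hp => h hp

lemma Atm_union (S T : Set (LTL P)) : Atm (S ∪ T) = Atm S ∪ Atm T := rfl

lemma Atm_insert_nonatom {χ : LTL P} (h : ∀ p, χ ≠ LTL.atom p) (S : Set (LTL P)) :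
    Atm (insert χ S) = Atm S := by
  ext p
  simp only [Atm, Set.mem_setOf_eq, Set.mem_insert_iff]
  constructor
  · rintro (heq | hm)
    · exact absurd heq.symm (h p)
    · exact hm
  · exact Or.inr

lemma NA_subset (S : Set (LTL P)) : NA S ⊆ S := fun _ h => h.1

lemma Atm_finite {S : Set (LTL P)} (h : S.Finite) : (Atm S).Finite := by
  have : Atm S = LTL.atom ⁻¹' S := rfl
  rw [this]
  exact Set.Finite.preimage (fun a _ b _ hab => by cases hab; rfl) h

lemma props_finite (φ : LTL P) : φ.props.Finite := Atm_finite φ.subF_finite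

lemma NA_union (S T : Set (LTL P)) : NA (S ∪ T) = NA S ∪ NA T := by
  ext χ
  simp only [NA, Set.mem_setOf_eq, Set.mem_union]
  tauto

lemma NA_insert_nonatom {χ : LTL P} (h : ∀ p, χ ≠ LTL.atom p) (S : Set (LTL P)) :
    NA (insert χ S) = insert χ (NA S) := by
  ext ψ
  simp only [NA, Set.mem_setOf_eq, Set.mem_insert_iff]
  constructor
  · rintro ⟨rfl | hm, hna⟩
    · exact Or.inl rfl
    · exact Or.inr ⟨hm, hna⟩
  · rintro (rfl | ⟨hm, hna⟩)
    · exact ⟨Or.inl rfl, h⟩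
    · exact ⟨Or.inr hm, hna⟩

/-- Key counting step for a binary connective. -/
lemma key_binary {φ₁ φ₂ root : LTL P}
    (hS : root.SubF = insert root (φ₁.SubF ∪ φ₂.SubF))
    (hna : ∀ p, root ≠ LTL.atom p)
    (hr1 : root ∉ φ₁.SubF) (hr2 : root ∉ φ₂.SubF)
    (ih1 : ∀ B : Set (LTL P), (∀ χ ∈ B, χ.SubF ⊆ B) →
      (Atm φ₁.SubF \ Atm B).ncard ≤ (NA φ₁.SubF \ B).ncard + 1)
    (ih2 : ∀ B : Set (LTL P), (∀ χ ∈ B, χ.SubF ⊆ B) →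
      (Atm φ₂.SubF \ Atm B).ncard ≤ (NA φ₂.SubF \ B).ncard + 1)
    (B : Set (LTL P)) (hB : ∀ χ ∈ B, χ.SubF ⊆ B) :
    (Atm root.SubF \ Atm B).ncard ≤ (NA root.SubF \ B).ncard + 1 := by
  by_cases hroot : root ∈ B
  · have hsub : root.SubF ⊆ B := hB root hroot
    have : Atm root.SubF \ Atm B = ∅ := by
      rw [Set.diff_eq_empty]; exact Atm_mono hsub
    simp [this]
  · -- notation
    set S1 := φ₁.SubF with hS1
    set S2 := φ₂.SubF with hS2
    have hfin1 : S1.Finite := φ₁.subF_finite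
    have hfin2 : S2.Finite := φ₂.subF_finite
    have hB' : ∀ χ ∈ B ∪ S1, χ.SubF ⊆ B ∪ S1 := by
      rintro χ (hχ | hχ)
      · exact (hB χ hχ).trans Set.subset_union_left
      · exact (φ₁.subF_closed χ hχ).trans Set.subset_union_right
    have h1 := ih1 B hB
    have h2 := ih2 (B ∪ S1) hB'
    -- LHS bound
    have hAtm : Atm root.SubF = Atm S1 ∪ Atm S2 := by
      rw [hS, Atm_insert_nonatom hna, Atm_union]
    have hsplit : (Atm S1 ∪ Atm S2) \ Atm B ⊆
        (Atm S1 \ Atm B) ∪ (Atm S2 \ Atm (B ∪ S1)) := by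
      rintro p ⟨hp | hp, hnb⟩
      · exact Or.inl ⟨hp, hnb⟩
      · by_cases h1' : p ∈ Atm S1
        · exact Or.inl ⟨h1', hnb⟩
        · refine Or.inr ⟨hp, ?_⟩
          rw [Atm_union]; rintro (h | h) <;> [exact hnb h; exact h1' h]
    have hLHS : (Atm root.SubF \ Atm B).ncard ≤
        (Atm S1 \ Atm B).ncard + (Atm S2 \ Atm (B ∪ S1)).ncard := by
      rw [hAtm]
      refine le_trans (Set.ncard_le_ncard hsplit ?_) (Set.ncard_union_le _ _)
      exact ((Atm_finite hfin1).diff).union ((Atm_finite hfin2).diff)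
    -- RHS structure
    have hNA : NA root.SubF \ B = insert root ((NA S1 ∪ NA S2) \ B) := by
      rw [hS, NA_insert_nonatom hna, NA_union]
      rw [Set.insert_diff_of_notMem _ hroot]
    have hrootNA : root ∉ (NA S1 ∪ NA S2) \ B := by
      rintro ⟨hm | hm, -⟩
      · exact hr1 (NA_subset _ hm)
      · exact hr2 (NA_subset _ hm)
    have hNAncard : (NA root.SubF \ B).ncard = ((NA S1 ∪ NA S2) \ B).ncard + 1 := by
      rw [hNA, Set.ncard_insert_of_notMem hrootNA
        (((hfin1.subset (NA_subset _)).union (hfin2.subset (NA_subset _))).diff)]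
    -- disjoint sum bound
    have hdisj : Disjoint (NA S1 \ B) (NA S2 \ (B ∪ S1)) := by
      rw [Set.disjoint_left]
      rintro χ ⟨hm, -⟩ ⟨-, hnb⟩
      exact hnb (Or.inr (NA_subset _ hm))
    have hsum : (NA S1 \ B).ncard + (NA S2 \ (B ∪ S1)).ncard ≤
        ((NA S1 ∪ NA S2) \ B).ncard := by
      rw [← Set.ncard_union_eq hdisj ((hfin1.subset (NA_subset _)).diff)
        ((hfin2.subset (NA_subset _)).diff)]
      refine Set.ncard_le_ncard ?_
        (((hfin1.subset (NA_subset _)).union (hfin2.subset (NA_subset _))).diff)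
      rintro χ (⟨hm, hnb⟩ | ⟨hm, hnb⟩)
      · exact ⟨Or.inl hm, hnb⟩
      · exact ⟨Or.inr hm, fun hb => hnb (Or.inl hb)⟩
    omega

/-- Key counting lemma. -/
lemma key_count (φ : LTL P) : ∀ B : Set (LTL P), (∀ χ ∈ B, χ.SubF ⊆ B) →
    (Atm φ.SubF \ Atm B).ncard ≤ (NA φ.SubF \ B).ncard + 1 := by
  induction φ <;> intro B hB <;>
    first
    | -- atom
      (rename_i p
       have hsub : Atm (LTL.SubF (LTL.atom p)) \ Atm B ⊆ {p} := by
         rintro q ⟨hq, -⟩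
         have hq' : LTL.atom q ∈ ({LTL.atom p} : Set (LTL P)) := hq
         rw [Set.mem_singleton_iff] at hq'
         have h : q = p := by injection hq'
         simp [h]
       calc (Atm (LTL.SubF (LTL.atom p)) \ Atm B).ncard
           ≤ ({p} : Set P).ncard := Set.ncard_le_ncard hsub (Set.finite_singleton _)
         _ = 1 := Set.ncard_singleton _
         _ ≤ _ := le_add_self)
    | -- binary
      (rename_i ih₁ ih₂
       exact key_binary rfl (fun p h => by cases h)
         (LTL.not_mem_of_ht_lt (by simp only [LTL.ht]; omega))
         (LTL.not_mem_of_ht_lt (by simp only [LTL.ht]; omega)) ih₁ ih₂ B hB)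
    | -- unary
      (rename_i ψ ih
       simp only [LTL.SubF]
       rw [Atm_insert_nonatom (fun p h => by cases h)]
       refine le_trans (ih B hB) (Nat.add_le_add_right (Set.ncard_le_ncard ?_ ?_) 1)
       · rw [NA_insert_nonatom (fun p h => by cases h)]
         exact Set.diff_subset_diff_left (Set.subset_insert _ _)
       · exact ((ψ.subF_finite.insert _).subset (NA_subset _)).diff)

lemma atom_injective : Function.Injective (LTL.atom : P → LTL P) :=
  fun a b h => by injection h

lemma diff_NA (S : Set (LTL P)) : S \ NA S = LTL.atom '' Atm S := by
  ext ψ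
  simp only [Set.mem_diff, NA, Set.mem_setOf_eq, Set.mem_image, Atm, not_and, not_forall]
  constructor
  · rintro ⟨hm, hne⟩
    obtain ⟨p, hp⟩ := hne hm
    rw [not_not] at hp
    exact ⟨p, by rw [← hp]; exact hm, hp.symm⟩
  · rintro ⟨p, hp, rfl⟩
    exact ⟨hp, fun _ => ⟨p, by simp⟩⟩

/-- The size of a formula is at least `2 |props| - 1`. -/
lemma sz_bound (φ : LTL P) : 2 * φ.props.ncard ≤ φ.Sz + 1 := by
  have hkey := key_count φ ∅ (fun χ hχ => absurd hχ (Set.notMem_empty χ))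
  have hAe : Atm (∅ : Set (LTL P)) = ∅ := by
    ext p; simp [Atm]
  rw [hAe, Set.diff_empty, Set.diff_empty] at hkey
  have hsz : (φ.SubF \ NA φ.SubF).ncard + (NA φ.SubF).ncard = φ.Sz :=
    Set.ncard_diff_add_ncard_of_subset (NA_subset _) φ.subF_finite
  have himg : (φ.SubF \ NA φ.SubF).ncard = (Atm φ.SubF).ncard := by
    rw [diff_NA, Set.ncard_image_of_injective _ atom_injective]
  rw [props_eq_Atm]
  omega

@[simp] lemma shift_constW (α : Set P) (i : ℕ) : shift (constW α) i = constW α := rfl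

lemma mem_props_atom (p : P) : p ∈ (LTL.atom p : LTL P).props := rfl

/-- Satisfaction of a formula on a constant word only depends on the
intersection of the letter with the propositions of the formula. -/
lemma sat_const_congr (φ : LTL P) : ∀ α β : Set P,
    (∀ p ∈ φ.props, (p ∈ α ↔ p ∈ β)) → (φ.Sat (constW α) ↔ φ.Sat (constW β)) := by
  have hu : ∀ (ψ root : LTL P), ψ.SubF ⊆ root.SubF → ∀ p ∈ ψ.props, p ∈ root.props :=
    fun ψ root h p hp => h hp
  induction φ with
  | atom p => intro α β h; exact h p (mem_props_atom p)
  | lnot φ ih =>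
      intro α β h
      have h1 := ih α β (fun p hp => h p (Set.mem_insert_iff.mpr (Or.inr hp)))
      simp only [LTL.Sat]; rw [h1]
  | next φ ih =>
      intro α β h
      have h1 := ih α β (fun p hp => h p (Set.mem_insert_iff.mpr (Or.inr hp)))
      simp only [LTL.Sat, shift_constW]; rw [h1]
  | fut φ ih =>
      intro α β h
      have h1 := ih α β (fun p hp => h p (Set.mem_insert_iff.mpr (Or.inr hp)))
      simp only [LTL.Sat, shift_constW]; rw [h1]
  | glob φ ih =>
      intro α β h
      have h1 := ih α β (fun p hp => h p (Set.mem_insert_iff.mpr (Or.inr hp)))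
      simp only [LTL.Sat, shift_constW]; rw [h1]
  | land φ ψ ih₁ ih₂ =>
      intro α β h
      have h1 := ih₁ α β (fun p hp => h p (Set.mem_insert_iff.mpr (Or.inr (Set.mem_union_left _ hp))))
      have h2 := ih₂ α β (fun p hp => h p (Set.mem_insert_iff.mpr (Or.inr (Set.mem_union_right _ hp))))
      simp only [LTL.Sat, shift_constW]; rw [h1, h2]
  | lor φ ψ ih₁ ih₂ =>
      intro α β h
      have h1 := ih₁ α β (fun p hp => h p (Set.mem_insert_iff.mpr (Or.inr (Set.mem_union_left _ hp))))
      have h2 := ih₂ α β (fun p hp => h p (Set.mem_insert_iff.mpr (Or.inr (Set.mem_union_right _ hp))))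
      simp only [LTL.Sat, shift_constW]; rw [h1, h2]
  | limp φ ψ ih₁ ih₂ =>
      intro α β h
      have h1 := ih₁ α β (fun p hp => h p (Set.mem_insert_iff.mpr (Or.inr (Set.mem_union_left _ hp))))
      have h2 := ih₂ α β (fun p hp => h p (Set.mem_insert_iff.mpr (Or.inr (Set.mem_union_right _ hp))))
      simp only [LTL.Sat, shift_constW]; rw [h1, h2]
  | liff φ ψ ih₁ ih₂ =>
      intro α β h
      have h1 := ih₁ α β (fun p hp => h p (Set.mem_insert_iff.mpr (Or.inr (Set.mem_union_left _ hp))))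
      have h2 := ih₂ α β (fun p hp => h p (Set.mem_insert_iff.mpr (Or.inr (Set.mem_union_right _ hp))))
      simp only [LTL.Sat, shift_constW]; rw [h1, h2]
  | untl φ ψ ih₁ ih₂ =>
      intro α β h
      have h1 := ih₁ α β (fun p hp => h p (Set.mem_insert_iff.mpr (Or.inr (Set.mem_union_left _ hp))))
      have h2 := ih₂ α β (fun p hp => h p (Set.mem_insert_iff.mpr (Or.inr (Set.mem_union_right _ hp))))
      simp only [LTL.Sat, shift_constW]; rw [h1, h2]
  | rel φ ψ ih₁ ih₂ =>
      intro α β h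
      have h1 := ih₁ α β (fun p hp => h p (Set.mem_insert_iff.mpr (Or.inr (Set.mem_union_left _ hp))))
      have h2 := ih₂ α β (fun p hp => h p (Set.mem_insert_iff.mpr (Or.inr (Set.mem_union_right _ hp))))
      simp only [LTL.Sat, shift_constW]; rw [h1, h2]
  | wuntl φ ψ ih₁ ih₂ =>
      intro α β h
      have h1 := ih₁ α β (fun p hp => h p (Set.mem_insert_iff.mpr (Or.inr (Set.mem_union_left _ hp))))
      have h2 := ih₂ α β (fun p hp => h p (Set.mem_insert_iff.mpr (Or.inr (Set.mem_union_right _ hp))))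
      simp only [LTL.Sat, shift_constW]; rw [h1, h2]
  | mrel φ ψ ih₁ ih₂ =>
      intro α β h
      have h1 := ih₁ α β (fun p hp => h p (Set.mem_insert_iff.mpr (Or.inr (Set.mem_union_left _ hp))))
      have h2 := ih₂ α β (fun p hp => h p (Set.mem_insert_iff.mpr (Or.inr (Set.mem_union_right _ hp))))
      simp only [LTL.Sat, shift_constW]; rw [h1, h2]

lemma mem_props_lor {p : P} {φ ψ : LTL P} (h : p ∈ (LTL.lor φ ψ).props) :
    p ∈ φ.props ∨ p ∈ ψ.props := by
  have h' : LTL.atom p ∈ insert (LTL.lor φ ψ) (φ.SubF ∪ ψ.SubF) := h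
  rcases Set.mem_insert_iff.mp h' with heq | hm
  · cases heq
  · exact hm

lemma vDisj_props (v : ℕ → Bool) : ∀ n, ∀ p ∈ (vDisj v (n + 1)).props,
    p.1 ≤ n ∧ p.2 = v p.1 := by
  intro n
  induction n with
  | zero =>
      intro p hp
      have h' : LTL.atom p ∈ ({LTL.atom ((0 : ℕ), v 0)} : Set (LTL Lit)) := hp
      rw [Set.mem_singleton_iff] at h'
      have : p = ((0 : ℕ), v 0) := by injection h'
      simp [this]
  | succ n ih =>
      intro p hp
      rcases mem_props_lor hp with h | h
      · have := ih p h
        exact ⟨by omega, this.2⟩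
      · have h' : LTL.atom p ∈ ({LTL.atom ((n + 1 : ℕ), v (n + 1))} : Set (LTL Lit)) := h
        rw [Set.mem_singleton_iff] at h'
        have : p = ((n + 1 : ℕ), v (n + 1)) := by injection h'
        simp [this]

lemma vDisj_sz (v : ℕ → Bool) : ∀ n, (vDisj v (n + 1)).Sz ≤ 2 * n + 1 := by
  intro n
  induction n with
  | zero => simp [LTL.Sz, vDisj, LTL.SubF]
  | succ n ih =>
      have h1 : (vDisj v (n + 2)).SubF =
          insert (vDisj v (n + 2)) ((vDisj v (n + 1)).SubF ∪
            {LTL.atom ((n + 1 : ℕ), v (n + 1))}) := rfl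
      calc (vDisj v (n + 2)).Sz
          ≤ ((vDisj v (n + 1)).SubF ∪ {LTL.atom ((n + 1 : ℕ), v (n + 1))}).ncard + 1 := by
            rw [LTL.Sz, h1]; exact Set.ncard_insert_le _ _
        _ ≤ (vDisj v (n + 1)).SubF.ncard + 1 + 1 := by
            have := Set.ncard_union_le (vDisj v (n + 1)).SubF
              ({LTL.atom ((n + 1 : ℕ), v (n + 1))} : Set (LTL Lit))
            rw [Set.ncard_singleton] at this
            omega
        _ ≤ 2 * (n + 1) + 1 := by have := ih; rw [LTL.Sz] at this; omega

lemma vDisj_sat (v : ℕ → Bool) (w : ℕ → Set Lit) :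
    ∀ n, ((vDisj v (n + 1)).Sat w ↔ ∃ k ≤ n, (k, v k) ∈ w 0) := by
  intro n
  induction n with
  | zero =>
      simp only [vDisj, LTL.Sat]
      constructor
      · intro h; exact ⟨0, le_refl _, h⟩
      · rintro ⟨k, hk, h⟩; interval_cases k; exact h
  | succ n ih =>
      show ((vDisj v (n + 1)).Sat w ∨ _) ↔ _
      rw [ih]
      constructor
      · rintro (⟨k, hk, h⟩ | h)
        · exact ⟨k, by omega, h⟩
        · exact ⟨n + 1, le_refl _, h⟩
      · rintro ⟨k, hk, h⟩
        rcases Nat.lt_or_ge k (n + 1) with hlt | hge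
        · exact Or.inl ⟨k, by omega, h⟩
        · have : k = n + 1 := by omega
          subst this
          exact Or.inr h

/-- `Φ` is satisfiable iff some LTL formula of size at most `2m - 1`
separates `𝒫` and `𝒩`. -/
theorem ltl_learning_reduction_correct (m : ℕ) (hm : 0 < m) (Φ : List Clause3)
    (hvars : cnfVars m Φ) :
    (∃ v : ℕ → Bool, cnfSat v Φ) ↔
      ∃ φ : LTL Lit, propsInRange m φ ∧ φ.Sz ≤ 2 * m - 1 ∧ Separates m Φ φ := by
  constructor
  · -- satisfiable ⇒ separating formula
    rintro ⟨v, hv⟩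
    obtain ⟨n, rfl⟩ : ∃ n, m = n + 1 := ⟨m - 1, by omega⟩
    refine ⟨vDisj v (n + 1), ?_, ?_, ?_, ?_⟩
    · intro p hp
      have := vDisj_props v n p hp
      omega
    · have := vDisj_sz v n
      omega
    · rintro w (⟨c, hc, rfl⟩ | ⟨k, hk, rfl⟩)
      · rw [vDisj_sat]
        rcases hv c hc with hl | hl | hl
        · refine ⟨c.1.1, by have := (hvars c hc).1; omega, ?_⟩
          have : ((c.1.1 : ℕ), v c.1.1) = c.1 := by
            rw [hl]
          rw [this]
          exact Or.inl rfl
        · refine ⟨c.2.1.1, by have := (hvars c hc).2.1; omega, ?_⟩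
          have : ((c.2.1.1 : ℕ), v c.2.1.1) = c.2.1 := by
            rw [hl]
          rw [this]
          exact Or.inr (Or.inl rfl)
        · refine ⟨c.2.2.1, by have := (hvars c hc).2.2; omega, ?_⟩
          have : ((c.2.2.1 : ℕ), v c.2.2.1) = c.2.2 := by
            rw [hl]
          rw [this]
          exact Or.inr (Or.inr rfl)
      · rw [vDisj_sat]
        refine ⟨k, by omega, ?_⟩
        show (k, v k) ∈ rho k
        cases hvk : v k
        · exact Or.inr rfl
        · exact Or.inl rfl
    · rw [vDisj_sat]
      rintro ⟨k, -, h⟩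
      exact h
  · -- separating formula ⇒ satisfiable
    rintro ⟨φ, hrange, hsz, hpos, hneg⟩
    have hfin := props_finite φ
    have hcard : φ.props.ncard ≤ m := by
      have := sz_bound φ
      omega
    have hinter : ∀ k, k < m → ∃ p, p ∈ φ.props ∧ p ∈ rho k := by
      intro k hk
      by_contra hcon
      push_neg at hcon
      have hcong := sat_const_congr φ (rho k) ∅ (fun p hp => by
        simp only [Set.mem_empty_iff_false, iff_false]
        exact fun hr => hcon p hp hr)
      have hsat : φ.Sat (constW (rho k)) := hpos _ (Or.inr ⟨k, hk, rfl⟩)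
      exact hneg (hcong.mp hsat)
    choose f hf1 hf2 using hinter
    set g : Fin m → Lit := fun k => f k.1 k.2 with hg
    have hfst : ∀ k : Fin m, (g k).1 = k.1 := by
      intro k
      have h := hf2 k.1 k.2
      simp only [rho, Set.mem_insert_iff, Set.mem_singleton_iff] at h
      show (f k.1 k.2).1 = k.1
      rcases h with h | h <;> rw [h]
    have hginj : Function.Injective g := by
      intro k₁ k₂ h
      apply Fin.ext
      rw [← hfst k₁, ← hfst k₂, h]
    have hsub : Set.range g ⊆ φ.props := by
      rintro _ ⟨k, rfl⟩
      exact hf1 k.1 k.2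
    have hrangecard : (Set.range g).ncard = m := by
      rw [← Set.image_univ, Set.ncard_image_of_injective _ hginj, Set.ncard_univ]
      simp
    have heq : Set.range g = φ.props :=
      Set.eq_of_subset_of_ncard_le hsub (by omega) hfin
    classical
    refine ⟨fun k => if h : k < m then (g ⟨k, h⟩).2 else true, ?_⟩
    set v : ℕ → Bool := fun k => if h : k < m then (g ⟨k, h⟩).2 else true with hvdef
    have huniq : ∀ p ∈ φ.props, p.2 = v p.1 := by
      intro p hp
      rw [← heq] at hp
      obtain ⟨k, rfl⟩ := hp
      have h1 : (g k).1 = k.1 := hfst k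
      have hlt : (g k).1 < m := by rw [h1]; exact k.2
      have hk' : (⟨(g k).1, hlt⟩ : Fin m) = k := Fin.ext h1
      rw [hvdef]
      simp only [hlt, dif_pos, hk']
    intro c hc
    have hsat := hpos _ (Or.inl ⟨c, hc, rfl⟩)
    have hex : ∃ p ∈ φ.props, p ∈ clauseSet c := by
      by_contra hcon
      push_neg at hcon
      refine hneg ((sat_const_congr φ (clauseSet c) ∅ (fun p hp => by
        simp only [Set.mem_empty_iff_false, iff_false]
        exact fun hr => hcon p hp hr)).mp hsat)
    obtain ⟨p, hp, hpc⟩ := hex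
    have hpv : p.2 = v p.1 := huniq p hp
    rcases hpc with rfl | rfl | rfl
    · exact Or.inl hpv.symm
    · exact Or.inr (Or.inl hpv.symm)
    · exact Or.inr (Or.inr hpv.symm)
end Temporal
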